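/- The sequence q is strictly increasing: q(k) < q(k+1) for every integer k ≥ 0. -/
import Mathlib


/-- `s k` for `k ≥ 1`: `s k = (k/p)·((4m−2)·p + 4) − 2m` if `p ∣ k`, and
`s k = (4m−2)·k + 2·⌊2k/p⌋ − 2m + 2` otherwise.  (For `k ≥ 1` and `p ≥ 3`,
integer division agrees with the floor of the rational quotient.) -/
def sSeq (m p k : ℤ) : ℤ :=
  if p ∣ k then (k / p) * ((4 * m - 2) * p + 4) - 2 * m
  else (4 * m - 2) * k + 2 * ((2 * k) / p) - 2 * m + 2

/-- `Q k`, the top degree of the `k`-th column of the first page of the spectral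
sequence: `Q 0 = 2m+1`, and for `k ≥ 1`, `Q k = 4m−1+s_k−k` if `p ∤ k` and
`Q k = 4m+1+s_k−k` if `p ∣ k`. -/
def QSeq (m p k : ℤ) : ℤ :=
  if k = 0 then 2 * m + 1
  else if p ∣ k then 4 * m + 1 + sSeq m p k - k
  else 4 * m - 1 + sSeq m p k - k

/-- `q k`, the bottom degree of the `k`-th column of the first page of the
spectral sequence: `q 0 = 0` and `q k = s_k − k` for `k ≥ 1`. -/
def qSeq (m p k : ℤ) : ℤ :=
  if k = 0 then 0 else sSeq m p k - k

theorem qSeq_strictMono (m p : ℤ) (hm : 1 ≤ m) (hp : 3 ≤ p) :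
    ∀ k : ℤ, 0 ≤ k → qSeq m p k < qSeq m p (k + 1) := by
  have hp0 : (0:ℤ) < p := by omega
  intro k hk
  rcases eq_or_lt_of_le hk with h0 | h1
  · -- k = 0
    subst h0
    have hnd : ¬ p ∣ (1 : ℤ) := by
      intro h
      have := Int.le_of_dvd one_pos h
      omega
    have e : (2 * (0 + 1 : ℤ)) / p = 0 :=
      Int.ediv_eq_zero_of_lt (by norm_num) (by omega)
    have e' : (2:ℤ) / p = 0 := Int.ediv_eq_zero_of_lt (by norm_num) (by omega)
    norm_num [qSeq, sSeq, hnd, e, e']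
    linarith
  · -- k ≥ 1
    have hk0 : k ≠ 0 := by omega
    have hk1 : k + 1 ≠ 0 := by omega
    unfold qSeq sSeq
    rw [if_neg hk0, if_neg hk1]
    by_cases hdk : p ∣ k
    · obtain ⟨a, ha⟩ := hdk
      have ha1 : 1 ≤ a := by nlinarith
      have hnd : ¬ p ∣ (k + 1) := by
        rintro ⟨b, hb⟩
        have h1 : p * (b - a) = 1 := by rw [mul_sub, ← hb, ← ha]; ring
        have := Int.le_of_dvd one_pos ⟨b - a, h1.symm⟩
        omega
      rw [if_pos ⟨a, ha⟩, if_neg hnd]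
      have e1 : k / p = a := by rw [ha]; exact Int.mul_ediv_cancel_left a (by omega)
      have e2 : (2 * (k + 1)) / p = 2 * a := by
        have h2 : 2 * (k + 1) = 2 + (2 * a) * p := by rw [ha]; ring
        rw [h2, Int.add_mul_ediv_right _ _ (by omega : p ≠ 0),
          Int.ediv_eq_zero_of_lt (by norm_num) (by omega), zero_add]
      rw [e1, e2]
      subst ha
      nlinarith
    · by_cases hdk1 : p ∣ (k + 1)
      · obtain ⟨a, ha⟩ := hdk1
        have ha1 : 1 ≤ a := by nlinarith
        rw [if_neg hdk, if_pos ⟨a, ha⟩]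
        have e1 : (k + 1) / p = a := by rw [ha]; exact Int.mul_ediv_cancel_left a (by omega)
        have e2 : (2 * k) / p = 2 * a - 1 := by
          have h2 : 2 * k = (p - 2) + (2 * a - 1) * p := by
            have : k = p * a - 1 := by omega
            rw [this]; ring
          rw [h2, Int.add_mul_ediv_right _ _ (by omega : p ≠ 0),
            Int.ediv_eq_zero_of_lt (by omega) (by omega), zero_add]
        rw [e1, e2]
        have hkv : k = p * a - 1 := by omega
        subst hkv
        nlinarith
      · rw [if_neg hdk, if_neg hdk1]
        have hmono : (2 * k) / p ≤ (2 * (k + 1)) / p :=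
          Int.ediv_le_ediv hp0 (by linarith)
        linarith
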